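/- For any two probability distributions θ₁, θ₂ on a finite set, the chi-squared capacity C(θ₁,θ₂) := sup_{r∈[0,1]} r(1−r) Σ_x (θ₁(x)−θ₂(x))²/(r θ₁(x)+(1−r)θ₂(x)) satisfies C(θ₁,θ₂) ≤ 2H²(θ₁,θ₂), where H²(θ₁,θ₂) = (1/2) Σ_x (√θ₁(x) − √θ₂(x))² is the squared Hellinger distance. -/
import Mathlib


open Finset

/-- For two distributions on a finite set, the chi-squared capacity
`C(θ₁,θ₂) = sup_{r∈[0,1]} r(1−r) ∑_x (θ₁ x − θ₂ x)²/(r θ₁ x + (1−r) θ₂ x)` is at most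
twice the squared Hellinger distance `H²(θ₁,θ₂) = (1/2) ∑_x (√(θ₁ x) − √(θ₂ x))²`. -/
theorem capacity_two_le_two_hellinger {X : Type*} [Fintype X]
    (θ₁ θ₂ : X → ℝ)
    (h₁0 : ∀ x, 0 ≤ θ₁ x) (h₂0 : ∀ x, 0 ≤ θ₂ x)
    (h₁1 : ∑ x, θ₁ x = 1) (h₂1 : ∑ x, θ₂ x = 1) :
    sSup ((fun r : ℝ =>
        r * (1 - r) * ∑ x, (θ₁ x - θ₂ x) ^ 2 / (r * θ₁ x + (1 - r) * θ₂ x)) ''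
          Set.Icc (0 : ℝ) 1)
      ≤ 2 * ((1 / 2) * ∑ x, (Real.sqrt (θ₁ x) - Real.sqrt (θ₂ x)) ^ 2) := by
  apply csSup_le
  · exact ((Set.nonempty_Icc.2 zero_le_one).image _)
  · rintro y ⟨r, ⟨hr0, hr1⟩, rfl⟩
    simp only
    rw [mul_sum]
    have h2 : (2:ℝ) * ((1/2) * ∑ x, (Real.sqrt (θ₁ x) - Real.sqrt (θ₂ x)) ^ 2)
        = ∑ x, (Real.sqrt (θ₁ x) - Real.sqrt (θ₂ x)) ^ 2 := by ring
    rw [h2]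
    apply Finset.sum_le_sum
    intro x _
    have ha := h₁0 x
    have hb := h₂0 x
    have hd : 0 ≤ r * θ₁ x + (1 - r) * θ₂ x := by
      have : 0 ≤ 1 - r := by linarith
      positivity
    rcases eq_or_lt_of_le hd with h | h
    · rw [← h, div_zero, mul_zero]
      positivity
    · rw [mul_div_assoc', div_le_iff₀ h]
      have h1 : Real.sqrt (θ₁ x) ^ 2 = θ₁ x := Real.sq_sqrt ha
      have h2 : Real.sqrt (θ₂ x) ^ 2 = θ₂ x := Real.sq_sqrt hb
      generalize Real.sqrt (θ₁ x) = u at h1 ⊢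
      generalize Real.sqrt (θ₂ x) = v at h2 ⊢
      rw [← h1, ← h2]
      nlinarith [sq_nonneg ((u - v) * (r * u - (1 - r) * v))]
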